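/- In the ring R_B/I_B as above, if σ is a 2-partition that does not break an ordered partition τ (i.e., there is a consecutive pair (τ_b, τ_{b+1}) with τ_b \ σ_1 ≠ ∅ and τ_{b+1} ∩ σ_1 ≠ ∅), then l_σ · m(τ) ≡ 0 mod I_B. -/

import Mathlib

/-- The ideal `I_B` in the ring `R_B` with generators `l_σ` indexed by 2-partitions
(encoded by their first components), generated by the linear relations `r¹_{ij}` and the
quadratic relations `l_σ l_τ` for incompatible pairs. -/
noncomputable def IB (α : Type) [Fintype α] [DecidableEq α]
    (k : Type) [CommRing k] : Ideal (MvPolynomial (Finset α) k) :=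
  Ideal.span
    ({x | ∃ i j : α, i ≠ j ∧ x =
        (∑ s : Finset α, if i ∈ s ∧ j ∉ s then MvPolynomial.X s else 0) -
        (∑ s : Finset α, if j ∈ s ∧ i ∉ s then MvPolynomial.X s else 0)} ∪
     {x | ∃ s t : Finset α,
        (∃ i j : α, i ∈ s ∧ j ∉ s ∧ j ∈ t ∧ i ∉ t) ∧
        x = MvPolynomial.X s * MvPolynomial.X t})

/-- The partial union `τ_1 ∪ … ∪ τ_{a+1}` of an ordered partition. -/
def pu {α : Type} [DecidableEq α] {M : ℕ} [Fintype α]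
    (τ : Fin (M + 1) → Finset α) (a : Fin M) : Finset α :=
  (Finset.univ.filter (fun b : Fin (M + 1) => b.val ≤ a.val)).biUnion τ

/-- The good monomial `m(τ)` of an ordered partition `τ` of length `N+1`: the product of
the variables attached to its good family of 2-partitions. -/
noncomputable def gm {α : Type} [Fintype α] [DecidableEq α] {k : Type} [CommRing k]
    {N : ℕ} (τ : Fin (N + 1) → Finset α) : MvPolynomial (Finset α) k :=
  ∏ a : Fin N, MvPolynomial.X (pu τ a)

/-- If the 2-partition `σ` (with first component `s`) does not break the ordered
partition `τ` — i.e. there is a bad pair `(τ_b, τ_{b+1})` with `τ_b \ σ_1 ≠ ∅` and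
`τ_{b+1} ∩ σ_1 ≠ ∅` — then `l_σ · m(τ) ≡ 0 mod I_B`. -/
theorem stmt_13 {α : Type} [Fintype α] [DecidableEq α] {k : Type} [CommRing k]
    (N : ℕ) (τ : Fin (N + 1) → Finset α)
    (hne : ∀ i, (τ i).Nonempty) (hdisj : ∀ i j, i ≠ j → Disjoint (τ i) (τ j))
    (hcov : Finset.univ.biUnion τ = Finset.univ)
    (s : Finset α) (hs1 : s.Nonempty) (hs2 : s ≠ Finset.univ)
    (hnb : ∃ b c : Fin (N + 1), c.val = b.val + 1 ∧ (τ b \ s).Nonempty ∧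
      (τ c ∩ s).Nonempty) :
    MvPolynomial.X s * gm (k := k) τ ∈ IB α k := by
  obtain ⟨b, c, hc, ⟨i, hi⟩, ⟨j, hj⟩⟩ := hnb
  rw [Finset.mem_sdiff] at hi
  rw [Finset.mem_inter] at hj
  have hbN : b.val < N := by have := c.isLt; omega
  set b' : Fin N := ⟨b.val, hbN⟩ with hb'
  set t := pu τ b' with ht
  have hit : i ∈ t := by
    rw [ht, pu, Finset.mem_biUnion]
    exact ⟨b, Finset.mem_filter.2 ⟨Finset.mem_univ _, le_refl _⟩, hi.1⟩
  have hjt : j ∉ t := by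
    rw [ht, pu, Finset.mem_biUnion]
    rintro ⟨d, hd, hjd⟩
    have hd' := (Finset.mem_filter.1 hd).2
    have hdc : d ≠ c := by
      intro h; rw [h] at hd'; simp only [hc] at hd'; have hbv : b'.val = b.val := rfl; omega
    exact absurd ((hdisj d c hdc).le_bot (Finset.mem_inter.2 ⟨hjd, hj.1⟩)) (Finset.notMem_empty j)
  have hgen : (MvPolynomial.X s * MvPolynomial.X t : MvPolynomial (Finset α) k) ∈ IB α k := by
    apply Ideal.subset_span
    exact Or.inr ⟨s, t, ⟨j, i, hj.2, hi.2, hit, hjt⟩, rfl⟩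
  have hfac : MvPolynomial.X s * gm (k := k) τ =
      (MvPolynomial.X s * MvPolynomial.X t) *
        ∏ a ∈ Finset.univ.erase b', MvPolynomial.X (pu τ a) := by
    rw [gm, ← Finset.mul_prod_erase Finset.univ _ (Finset.mem_univ b'), ht, mul_assoc]
  rw [hfac]
  exact Ideal.mul_mem_right _ _ hgen
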